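/- For a group Γ, the left-right action of Γ × Γ on Γ (given by (g,h)·x = g x h⁻¹) satisfies the minimal condition on stabilizers if and only if Γ satisfies the minimal condition on centralizers, i.e., there is no infinite sequence (g_n) in Γ such that the centralizers C_Γ(g_1, …, g_n) form a strictly decreasing sequence of subgroups. -/

import Mathlib

/-- The left-right action of `Γ × Γ` on `Γ`: `(g, h) • x = g * x * h⁻¹`. -/
instance leftRightAction (Γ : Type*) [Group Γ] : MulAction (Γ × Γ) Γ where
  smul := fun p x => p.1 * x * p.2⁻¹
  one_smul := fun x => by
    show (1 : Γ) * x * (1 : Γ)⁻¹ = x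
    simp
  mul_smul := fun p q x => by
    show (p.1 * q.1) * x * (p.2 * q.2)⁻¹ = p.1 * (q.1 * x * q.2⁻¹) * p.2⁻¹
    group

/-- The action of `G` on `S` satisfies the minimal condition on stabilizers. -/
def MinCondStabilizers (G S : Type*) [Group G] [MulAction G S] : Prop :=
  ¬ ∃ s : ℕ → S,
      StrictAnti (fun n : ℕ => ⨅ k ∈ Finset.range (n + 1), MulAction.stabilizer G (s k))

/-- The group `Γ` satisfies the minimal condition on centralizers: there is no infinite
sequence `(g n)` in `Γ` whose centralizers `C_Γ(g 0, …, g n)` are strictly decreasing. -/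
def MinCondCentralizers (Γ : Type*) [Group Γ] : Prop :=
  ¬ ∃ g : ℕ → Γ,
      StrictAnti (fun n : ℕ => Subgroup.centralizer {x : Γ | ∃ k ≤ n, x = g k})

section Aux

variable {Γ : Type*} [Group Γ]

private lemma conj_eq_iff (a x b : Γ) : a * x * b⁻¹ = x ↔ b = x⁻¹ * (a * x) := by
  rw [mul_inv_eq_iff_eq_mul, eq_inv_mul_iff_mul_eq]
  exact eq_comm

private lemma conj_eq_conj_iff (a x c : Γ) :
    x⁻¹ * (a * x) = c⁻¹ * (a * c) ↔ (x * c⁻¹) * a = a * (x * c⁻¹) := by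
  constructor
  · intro h
    have h2 := congrArg (fun t => x * t * c⁻¹) h
    simpa [mul_assoc] using h2.symm
  · intro h
    have h2 := congrArg (fun t => x⁻¹ * t * c) h
    simpa [mul_assoc] using h2.symm

private lemma mem_stabInf (s : ℕ → Γ) (n : ℕ) (p : Γ × Γ) :
    (p ∈ ⨅ k ∈ Finset.range (n + 1), MulAction.stabilizer (Γ × Γ) (s k)) ↔
      (p.1 ∈ Subgroup.centralizer {x : Γ | ∃ k ≤ n, x = s k * (s 0)⁻¹} ∧
        p.2 = (s 0)⁻¹ * (p.1 * s 0)) := by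
  have hsm : ∀ x : Γ, p • x = p.1 * x * p.2⁻¹ := fun _ => rfl
  simp only [Subgroup.mem_iInf, Finset.mem_range, MulAction.mem_stabilizer_iff, hsm,
    Nat.lt_succ_iff, Subgroup.mem_centralizer_iff, Set.mem_setOf_eq, conj_eq_iff]
  constructor
  · intro h
    have h0 := h 0 (Nat.zero_le n)
    refine ⟨?_, h0⟩
    rintro y ⟨k, hk, rfl⟩
    have := (h k hk).symm.trans h0
    exact (conj_eq_conj_iff p.1 (s k) (s 0)).mp this
  · rintro ⟨hc, hp2⟩
    intro k hk
    rw [hp2]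
    exact ((conj_eq_conj_iff p.1 (s k) (s 0)).mpr (hc _ ⟨k, hk, rfl⟩)).symm

private lemma stabInf_le_iff (s : ℕ → Γ) (m n : ℕ) :
    (⨅ k ∈ Finset.range (m + 1), MulAction.stabilizer (Γ × Γ) (s k)) ≤
      (⨅ k ∈ Finset.range (n + 1), MulAction.stabilizer (Γ × Γ) (s k)) ↔
    Subgroup.centralizer {x : Γ | ∃ k ≤ m, x = s k * (s 0)⁻¹} ≤
      Subgroup.centralizer {x : Γ | ∃ k ≤ n, x = s k * (s 0)⁻¹} := by
  constructor
  · intro h a ha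
    have := h ((mem_stabInf s m ((a, (s 0)⁻¹ * (a * s 0)) : Γ × Γ)).mpr ⟨ha, rfl⟩)
    exact ((mem_stabInf s n _).mp this).1
  · intro h p hp
    obtain ⟨h1, h2⟩ := (mem_stabInf s m p).mp hp
    exact (mem_stabInf s n p).mpr ⟨h h1, h2⟩

private lemma stabInf_lt_iff (s : ℕ → Γ) (m n : ℕ) :
    (⨅ k ∈ Finset.range (m + 1), MulAction.stabilizer (Γ × Γ) (s k)) <
      (⨅ k ∈ Finset.range (n + 1), MulAction.stabilizer (Γ × Γ) (s k)) ↔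
    Subgroup.centralizer {x : Γ | ∃ k ≤ m, x = s k * (s 0)⁻¹} <
      Subgroup.centralizer {x : Γ | ∃ k ≤ n, x = s k * (s 0)⁻¹} := by
  rw [lt_iff_le_not_ge, lt_iff_le_not_ge, stabInf_le_iff, stabInf_le_iff]

private lemma strictAnti_stabInf_iff (s : ℕ → Γ) :
    StrictAnti (fun n : ℕ => ⨅ k ∈ Finset.range (n + 1),
        MulAction.stabilizer (Γ × Γ) (s k)) ↔
    StrictAnti (fun n : ℕ =>
        Subgroup.centralizer {x : Γ | ∃ k ≤ n, x = s k * (s 0)⁻¹}) := by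
  constructor
  · intro h m n hmn
    exact (stabInf_lt_iff s n m).mp (h hmn)
  · intro h m n hmn
    exact (stabInf_lt_iff s n m).mpr (h hmn)

private lemma centralizer_insert_of_comm (a : Γ) (ha : ∀ z : Γ, a * z = z * a) (S : Set Γ) :
    Subgroup.centralizer (insert a S) = Subgroup.centralizer S := by
  ext z
  simp [Subgroup.mem_centralizer_iff, Set.forall_mem_insert, ha z]

end Aux

/-- The left-right action of `Γ × Γ` on `Γ` satisfies the minimal condition on stabilizers
if and only if `Γ` satisfies the minimal condition on centralizers. -/
theorem minCondStabilizers_leftRight_iff_minCondCentralizers (Γ : Type*) [Group Γ] :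
    MinCondStabilizers (Γ × Γ) Γ ↔ MinCondCentralizers Γ := by
  unfold MinCondStabilizers MinCondCentralizers
  rw [not_iff_not]
  constructor
  · rintro ⟨s, hs⟩
    exact ⟨fun k => s k * (s 0)⁻¹, (strictAnti_stabInf_iff s).mp hs⟩
  · rintro ⟨g, hg⟩
    -- first arrange that the centralizer of the first term is not `⊤`
    obtain ⟨g', hg', hne⟩ : ∃ g' : ℕ → Γ,
        StrictAnti (fun n : ℕ => Subgroup.centralizer {x : Γ | ∃ k ≤ n, x = g' k}) ∧
        Subgroup.centralizer {x : Γ | ∃ k ≤ 0, x = g' k} ≠ ⊤ := by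
      by_cases hc : Subgroup.centralizer {x : Γ | ∃ k ≤ 0, x = g k} = ⊤
      · have hcen : ∀ n : ℕ,
            Subgroup.centralizer {x : Γ | ∃ k ≤ n, x = g (k + 1)} =
            Subgroup.centralizer {x : Γ | ∃ k ≤ n + 1, x = g k} := by
          intro n
          have hset : {x : Γ | ∃ k ≤ n + 1, x = g k} =
              insert (g 0) {x : Γ | ∃ k ≤ n, x = g (k + 1)} := by
            ext x
            constructor
            · rintro ⟨k, hk, rfl⟩
              cases k with
              | zero => exact Set.mem_insert _ _
              | succ j => exact Set.mem_insert_of_mem _ ⟨j, Nat.succ_le_succ_iff.mp hk, rfl⟩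
            · rintro (rfl | ⟨j, hj, rfl⟩)
              · exact ⟨0, Nat.zero_le _, rfl⟩
              · exact ⟨j + 1, Nat.succ_le_succ hj, rfl⟩
          rw [hset, centralizer_insert_of_comm]
          intro z
          have hz : z ∈ Subgroup.centralizer {x : Γ | ∃ k ≤ 0, x = g k} := by
            rw [hc]; exact Subgroup.mem_top z
          exact Subgroup.mem_centralizer_iff.mp hz (g 0) ⟨0, le_refl 0, rfl⟩
        refine ⟨fun k => g (k + 1), ?_, ?_⟩
        · intro m n hmn
          simp only [hcen]
          exact hg (Nat.succ_lt_succ hmn)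
        · rw [hcen 0]
          have h01 := hg (Nat.lt_succ_self 0)
          simp only at h01
          rw [hc] at h01
          exact ne_top_of_lt h01
      · exact ⟨g, hg, hc⟩
    set s : ℕ → Γ := fun n => Nat.rec 1 (fun k _ => g' k) n with hs_def
    have hs0 : s 0 = 1 := rfl
    have hD0 : Subgroup.centralizer {x : Γ | ∃ k ≤ 0, x = s k * (s 0)⁻¹} = ⊤ := by
      rw [eq_top_iff]
      intro z _
      rw [Subgroup.mem_centralizer_iff]
      rintro y ⟨k, hk, rfl⟩
      obtain rfl : k = 0 := Nat.le_zero.mp hk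
      simp [hs0]
    have hDsucc : ∀ n : ℕ,
        Subgroup.centralizer {x : Γ | ∃ k ≤ n + 1, x = s k * (s 0)⁻¹} =
        Subgroup.centralizer {x : Γ | ∃ k ≤ n, x = g' k} := by
      intro n
      have hset : {x : Γ | ∃ k ≤ n + 1, x = s k * (s 0)⁻¹} =
          insert 1 {x : Γ | ∃ k ≤ n, x = g' k} := by
        ext x
        constructor
        · rintro ⟨k, hk, rfl⟩
          cases k with
          | zero => simp [hs0]
          | succ j =>
            refine Set.mem_insert_of_mem _ ⟨j, Nat.succ_le_succ_iff.mp hk, ?_⟩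
            simp [hs0]; rfl
        · rintro (rfl | ⟨j, hj, rfl⟩)
          · exact ⟨0, Nat.zero_le _, by simp [hs0]⟩
          · exact ⟨j + 1, Nat.succ_le_succ hj, by simp [hs0]; rfl⟩
      rw [hset, centralizer_insert_of_comm 1 (by simp)]
    refine ⟨s, (strictAnti_stabInf_iff s).mpr ?_⟩
    apply strictAnti_nat_of_succ_lt
    intro n
    cases n with
    | zero =>
      show Subgroup.centralizer {x : Γ | ∃ k ≤ 0 + 1, x = s k * (s 0)⁻¹} <
        Subgroup.centralizer {x : Γ | ∃ k ≤ 0, x = s k * (s 0)⁻¹}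
      rw [hDsucc 0, hD0]
      exact lt_top_iff_ne_top.mpr hne
    | succ m =>
      show Subgroup.centralizer {x : Γ | ∃ k ≤ m + 1 + 1, x = s k * (s 0)⁻¹} <
        Subgroup.centralizer {x : Γ | ∃ k ≤ m + 1, x = s k * (s 0)⁻¹}
      rw [hDsucc (m + 1), hDsucc m]
      exact hg' (Nat.lt_succ_self m)
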